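/- Let n and s be positive integers, and let D_n be the diamond {u ∈ ℤ² : ‖u‖₁ < 2n} with nearest-neighbor edges, with a vertex called odd or even according to the parity of the sum of its coordinates. Let H be a set of odd vertices of D_n. Suppose that every interval of s consecutive odd rows contains at most s vertices of H, and that no two vertices of H lie in the same column within vertical distance less than 2s (in rotated coordinates: for each ⟨i,j⟩ ∈ H there is no other ⟨i,j'⟩ ∈ H with |j−j'| < 2s, where ⟨i,j⟩ := ((i−j)/2, (i+j)/2)). Then there exists a matching of D_n that matches all even vertices but leaves every vertex of H unmatched. -/

import Mathlib

/-- The nearest-neighbour grid graph on `ℤ²`. -/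
def gridGraph : SimpleGraph (ℤ × ℤ) where
  Adj u v := |u.1 - v.1| + |u.2 - v.2| = 1
  symm := by
    constructor
    intro u v h
    simpa [abs_sub_comm] using h
  loopless := by
    constructor
    intro u h
    simp at h

/-- The diamond `D_n = {u ∈ ℤ² : ‖u‖₁ < 2n}`. -/
def diamond (n : ℕ) : Set (ℤ × ℤ) :=
  {u | |u.1| + |u.2| < 2 * n}

lemma mem_diamond_iff (n : ℕ) (u : ℤ × ℤ) :
    u ∈ diamond n ↔ (u.1 + u.2 ≤ 2*(n:ℤ) - 1 ∧ -(2*(n:ℤ) - 1) ≤ u.1 + u.2 ∧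
      u.2 - u.1 ≤ 2*(n:ℤ) - 1 ∧ -(2*(n:ℤ) - 1) ≤ u.2 - u.1) := by
  have : u ∈ diamond n ↔ |u.1| + |u.2| < 2 * (n:ℤ) := Iff.rfl
  rw [this]
  rcases abs_cases u.1 with ⟨h1, h1'⟩ | ⟨h1, h1'⟩ <;>
    rcases abs_cases u.2 with ⟨h2, h2'⟩ | ⟨h2, h2'⟩ <;> rw [h1, h2] <;> omega

lemma parking (s : ℕ) (hs : 0 < s) (H : Set (ℤ × ℤ)) (Qh Ph : ℤ × ℤ → ℤ)
    (hA : ∀ a : ℤ, ∀ T : Finset (ℤ × ℤ), ↑T ⊆ H →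
      (∀ x ∈ T, a + 1 ≤ Qh x ∧ Qh x ≤ a + s) → T.card ≤ s)
    (hB : ∀ g ∈ H, ∀ h ∈ H, g ≠ h → Ph g = Ph h → (s:ℤ) ≤ |Qh g - Qh h|) :
    ∀ F : Finset (ℤ × ℤ), ↑F ⊆ H → ∃ v : ℤ × ℤ → ℤ,
      (∀ h ∈ F, Qh h - s < v h ∧ v h ≤ Qh h) ∧
      (∀ g ∈ F, ∀ h ∈ F, Ph g < Ph h → ¬(v g ≤ v h ∧ v h ≤ Qh g)) ∧
      (∀ w : ℤ, (∃ g ∈ F, v g ≤ w ∧ w ≤ Qh g) → ∃ g ∈ F, v g = w) := by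
  classical
  intro F
  induction F using Finset.strongInduction with
  | _ F ih =>
    intro hFH
    rcases F.eq_empty_or_nonempty with rfl | hFne
    · exact ⟨fun _ => 0, by simp, by simp, by simp⟩
    obtain ⟨u, huF, humax⟩ : ∃ u ∈ F, ∀ x ∈ F, Ph x ≤ Ph u :=
      F.exists_max_image Ph hFne
    set F' : Finset (ℤ × ℤ) := F.erase u with hF'def
    have hF'sub : F' ⊆ F := Finset.erase_subset u F
    have hF'H : ↑F' ⊆ H := fun x hx => hFH (hF'sub hx)
    obtain ⟨v', h1, h2, h3⟩ := ih F' (Finset.erase_ssubset huF) hF'H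
    -- the free predicate
    set Pred : ℤ → Prop := fun w => w ≤ Qh u ∧ ∀ g ∈ F', ¬(v' g ≤ w ∧ w ≤ Qh g)
      with hPreddef
    have hPredInh : ∃ w, Pred w := by
      rcases F'.eq_empty_or_nonempty with hFe | hF'ne
      · exact ⟨Qh u, le_refl _, by simp [hFe]⟩
      · refine ⟨min (Qh u) (((F'.image v').min' (hF'ne.image v')) - 1),
          min_le_left _ _, ?_⟩
        intro g hg hcontra
        have : (F'.image v').min' (hF'ne.image v') ≤ v' g :=
          Finset.min'_le _ _ (Finset.mem_image_of_mem v' hg)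
        have h2' : min (Qh u) (((F'.image v').min' (hF'ne.image v')) - 1) ≤
            ((F'.image v').min' (hF'ne.image v')) - 1 := min_le_right _ _
        omega
    have hPredBdd : ∃ b : ℤ, ∀ z, Pred z → z ≤ b := ⟨Qh u, fun z hz => hz.1⟩
    obtain ⟨ω, hωP, hωmax⟩ := Int.exists_greatest_of_bdd hPredBdd hPredInh
    have hω1 : ω ≤ Qh u := hωP.1
    have hω2 : ∀ g ∈ F', ¬(v' g ≤ ω ∧ ω ≤ Qh g) := hωP.2
    -- any blocked value ≤ Qh u and > ω equals an assigned value
    have blockVal : ∀ w : ℤ, ω < w → w ≤ Qh u → ∃ g ∈ F', v' g = w := by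
      intro w hw1 hw2
      have hnp : ¬ Pred w := by
        intro hP
        have := hωmax w hP
        omega
      rw [hPreddef] at hnp
      have hex : ∃ g ∈ F', v' g ≤ w ∧ w ≤ Qh g := by
        by_contra hno
        push_neg at hno
        exact hnp ⟨hw2, fun g hg hc => absurd hc.2 (not_le.2 (hno g hg hc.1))⟩
      exact h3 w hex
    -- injectivity of v' on F'
    have vinj : ∀ g ∈ F', ∀ g' ∈ F', v' g = v' g' → g = g' := by
      intro g hg g' hg' hv
      by_contra hne
      rcases lt_trichotomy (Ph g) (Ph g') with hlt | heq | hgt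
      · exact h2 g hg g' hg' hlt ⟨le_of_eq hv, hv ▸ (h1 g hg).2⟩
      · have habs := hB g (hF'H hg) g' (hF'H hg') hne heq
        have hw1 := h1 g hg
        have hw2 := h1 g' hg'
        rcases abs_cases (Qh g - Qh g') with ⟨he, _⟩ | ⟨he, _⟩ <;> omega
      · exact h2 g' hg' g hg hgt ⟨le_of_eq hv.symm, hv ▸ (h1 g' hg').2⟩
    -- the key bound via the peeling argument
    have qu_bound : Qh u - s < ω := by
      by_contra hcon
      push_neg at hcon     -- ω ≤ Qh u - s
      -- greatest z such that (ω, z] ⊆ values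
      have hTinh : ∃ z : ℤ, Qh u ≤ z ∧ ∀ w, ω < w → w ≤ z → ∃ g ∈ F', v' g = w :=
        ⟨Qh u, le_refl _, fun w hw1 hw2 => blockVal w hw1 hw2⟩
      have hF'ne : F'.Nonempty := by
        obtain ⟨g, hg, _⟩ := blockVal (Qh u) (by omega) (le_refl _)
        exact ⟨g, hg⟩
      have hTbdd : ∃ b : ℤ, ∀ z, (Qh u ≤ z ∧ ∀ w, ω < w → w ≤ z →
          ∃ g ∈ F', v' g = w) → z ≤ b := by
        refine ⟨(F'.image v').max' (hF'ne.image v'), ?_⟩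
        intro z hz
        obtain ⟨g, hg, hvg⟩ := hz.2 z (by omega) (le_refl _)
        exact hvg ▸ Finset.le_max' _ _ (Finset.mem_image_of_mem v' hg)
      obtain ⟨z, ⟨hzQu, hzval⟩, hzmax⟩ := Int.exists_greatest_of_bdd hTbdd hTinh
      -- holes with value in (ω, z] have their row ≤ z
      have hz1 : ∀ g ∈ F', ω < v' g → v' g ≤ z → Qh g ≤ z := by
        intro g hg hgt hle
        by_contra hQ
        push_neg at hQ
        have : Qh u ≤ z + 1 ∧ ∀ w, ω < w → w ≤ z + 1 → ∃ g' ∈ F', v' g' = w := by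
          constructor
          · omega
          · intro w hw1 hw2
            rcases eq_or_lt_of_le hw2 with rfl | hlt
            · exact h3 _ ⟨g, hg, by omega, by omega⟩
            · exact hzval w hw1 (by omega)
        have := hzmax _ this
        omega
      -- the counting step
      have count : ∀ k : ℤ, 1 ≤ k → ω ≤ z - k*s →
          (∀ g ∈ F', z - k*s < v' g → v' g ≤ z - (k-1)*s →
            (z - k*s < Qh g ∧ Qh g ≤ z - (k-1)*s)) →
          ∀ e, e ∈ H → (e ∉ F' ∨ ¬(z - k*s < v' e ∧ v' e ≤ z - (k-1)*s)) →
          (z - k*s < Qh e ∧ Qh e ≤ z - (k-1)*s) → False := by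
        intro k hk hωk hpeel e heH he hQe
        have hsplit : z - (k-1)*s = z - k*s + s := by ring
        have hk1s : 0 ≤ (k-1)*s := mul_nonneg (by omega) (by positivity)
        set SH : Finset (ℤ × ℤ) :=
          F'.filter (fun g => z - k*s < v' g ∧ v' g ≤ z - (k-1)*s) with hSHdef
        have hIccsub : Finset.Icc (z - k*s + 1) (z - (k-1)*s) ⊆ SH.image v' := by
          intro w hw
          rw [Finset.mem_Icc] at hw
          obtain ⟨g, hg, hvg⟩ := hzval w (by omega) (by omega)
          exact Finset.mem_image.2 ⟨g, Finset.mem_filter.2 ⟨hg, by omega⟩, hvg⟩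
        have hcard1 : s ≤ SH.card := by
          have := Finset.card_le_card hIccsub
          have h2' := Finset.card_image_le (s := SH) (f := v')
          have h3' : (Finset.Icc (z - k*s + 1) (z - (k-1)*s)).card = s := by
            rw [Int.card_Icc]
            omega
          omega
        have heSH : e ∉ SH := by
          rcases he with he | he
          · exact fun hmem => he (Finset.mem_filter.1 hmem).1
          · exact fun hmem => he (Finset.mem_filter.1 hmem).2
        have hbig := hA (z - k*s) (insert e SH) ?_ ?_
        · rw [Finset.card_insert_of_notMem heSH] at hbig
          omega
        · intro x hx
          rcases Finset.mem_insert.1 hx with rfl | hx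
          · exact heH
          · exact hF'H (Finset.mem_filter.1 hx).1
        · intro x hx
          rcases Finset.mem_insert.1 hx with rfl | hx
          · omega
          · have hxm := Finset.mem_filter.1 hx
            have := hpeel x hxm.1 hxm.2.1 hxm.2.2
            omega
      -- peeling
      have peel : ∀ j : ℕ, ∀ k : ℤ, k = 1 + (j:ℤ) → (ω ≤ z - k*s →
          ∀ g ∈ F', z - k*s < v' g → v' g ≤ z - (k-1)*s →
            (z - k*s < Qh g ∧ Qh g ≤ z - (k-1)*s)) := by
        intro j
        induction j with
        | zero =>
          intro k hk hω1' g hg hgt hle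
          have hk1 : k = 1 := by simpa using hk
          subst hk1
          have e0 : z - (1-1:ℤ)*s = z := by ring
          have e1 : z - (1:ℤ)*s = z - s := by ring
          have hvq := h1 g hg
          have hQz := hz1 g hg (by omega) (by omega)
          exact ⟨by omega, by omega⟩
        | succ j ihj =>
          intro k hk hωk1 g hg hgt hle
          have hkj : k - 1 = 1 + (j:ℤ) := by push_cast at hk ⊢; omega
          have e1 : z - (k-1)*s = z - k*s + s := by ring
          have e2 : z - (k-1-1)*s = z - (k-1)*s + s := by ring
          have hvq := h1 g hg
          refine ⟨by omega, ?_⟩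
          by_contra hQ
          push_neg at hQ
          refine count (k-1) (by omega) (by omega)
            (fun g' hg' ha hb => ihj (k-1) hkj (by omega) g' hg' ha hb)
            g (hF'H hg) (Or.inr (by omega)) ⟨by omega, by omega⟩
      -- final contradiction: the window containing Qh u
      have hzω : 0 ≤ z - Qh u := by omega
      have hqm : (s:ℤ) * ((z - Qh u) / s) + (z - Qh u) % s = z - Qh u :=
        Int.mul_ediv_add_emod (z - Qh u) s
      have hmod1 : 0 ≤ (z - Qh u) % s := Int.emod_nonneg _ (by positivity)
      have hmod2 : (z - Qh u) % s < s := Int.emod_lt_of_pos _ (by positivity)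
      have hq0 : 0 ≤ (z - Qh u) / s := Int.ediv_nonneg hzω (by positivity)
      have A1 : z - ((z - Qh u) / s + 1)*s = z - (s:ℤ) * ((z - Qh u) / s) - s := by
        ring
      have A2 : z - (((z - Qh u) / s + 1) - 1)*s = z - (s:ℤ) * ((z - Qh u) / s) := by
        ring
      have hk1 : (1:ℤ) ≤ (z - Qh u) / s + 1 := by omega
      have hcast : (z - Qh u) / s + 1 = 1 + (((z - Qh u) / s).toNat : ℤ) := by
        omega
      refine count ((z - Qh u) / s + 1) hk1 (by omega)
        (fun g' hg' ha hb =>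
          peel ((z - Qh u) / s).toNat ((z - Qh u) / s + 1) hcast (by omega) g' hg' ha hb)
        u (hFH huF) (Or.inl (Finset.notMem_erase u F)) ⟨by omega, by omega⟩
    -- assemble
    refine ⟨Function.update v' u ω, ?_, ?_, ?_⟩
    · intro h hh
      rcases eq_or_ne h u with rfl | hne
      · rw [Function.update_self]
        exact ⟨qu_bound, hω1⟩
      · rw [Function.update_of_ne hne]
        exact h1 h (Finset.mem_erase.2 ⟨hne, hh⟩)
    · intro g hg h hh hPlt
      rcases eq_or_ne h u with rfl | hneh
      · have hgne : g ≠ h := by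
          intro hgh
          rw [hgh] at hPlt
          omega
        rw [Function.update_self, Function.update_of_ne hgne]
        exact hω2 g (Finset.mem_erase.2 ⟨hgne, hg⟩)
      · rcases eq_or_ne g u with rfl | hneg
        · have := humax h hh
          omega
        · rw [Function.update_of_ne hneh, Function.update_of_ne hneg]
          exact h2 g (Finset.mem_erase.2 ⟨hneg, hg⟩) h (Finset.mem_erase.2 ⟨hneh, hh⟩) hPlt
    · intro w hw
      obtain ⟨g, hg, hw1, hw2⟩ := hw
      rcases eq_or_ne g u with rfl | hne
      · rw [Function.update_self] at hw1
        rcases eq_or_lt_of_le hw1 with rfl | hlt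
        · exact ⟨g, hg, Function.update_self g ω v'⟩
        · obtain ⟨g', hg', hvg'⟩ := blockVal w hlt hw2
          refine ⟨g', hF'sub hg', ?_⟩
          rw [Function.update_of_ne (Finset.ne_of_mem_erase hg')]
          exact hvg'
      · rw [Function.update_of_ne hne] at hw1
        obtain ⟨g', hg', hvg'⟩ := h3 w ⟨g, Finset.mem_erase.2 ⟨hne, hg⟩, hw1, hw2⟩
        refine ⟨g', hF'sub hg', ?_⟩
        rw [Function.update_of_ne (Finset.ne_of_mem_erase hg')]
        exact hvg'

/-- Let `H` be a set of odd vertices of the diamond `D_n`.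
In the rotated coordinates `⟨i,j⟩ = ((i-j)/2, (i+j)/2)` (so a vertex `u` lies
in column `i = u.1 + u.2` and row `j = u.2 - u.1`), suppose that every
interval of `s` consecutive odd rows `⋃_{j=1}^{s} R_{2j+2a+1}` contains at
most `s` vertices of `H`, and that no two distinct vertices of `H` lie in the
same column with their row indices differing by less than `2s`.  Then there is
a matching of `D_n` matching all even vertices but leaving `H` unmatched. -/
theorem diamond_matching_all_even_avoiding
    (n s : ℕ) (hn : 0 < n) (hs : 0 < s)
    (H : Set (ℤ × ℤ)) (hHd : H ⊆ diamond n)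
    (hHodd : ∀ u ∈ H, Odd (u.1 + u.2))
    (hrows : ∀ a : ℤ,
      (H ∩ {u | ∃ j : ℤ, 1 ≤ j ∧ j ≤ (s : ℤ) ∧ u.2 - u.1 = 2 * j + 2 * a + 1}).ncard ≤ s)
    (hcol : ∀ u ∈ H, ∀ v ∈ H, u ≠ v → u.1 + u.2 = v.1 + v.2 →
      2 * (s : ℤ) ≤ |(u.2 - u.1) - (v.2 - v.1)|) :
    ∃ M : gridGraph.Subgraph, M.verts ⊆ diamond n ∧ M.IsMatching ∧
      (∀ u ∈ diamond n, Even (u.1 + u.2) → u ∈ M.verts) ∧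
      (∀ u ∈ H, u ∉ M.verts) := by
  classical
  -- finiteness of H
  have hdia_fin : (diamond n).Finite := by
    apply Set.Finite.subset (Set.finite_Icc ((-(2*(n:ℤ)), -(2*(n:ℤ))) : ℤ × ℤ)
      ((2*(n:ℤ), 2*(n:ℤ)) : ℤ × ℤ))
    intro u hu
    rw [mem_diamond_iff] at hu
    rw [Set.mem_Icc]
    constructor <;> rw [Prod.le_def] <;> constructor <;> simp <;> omega
  have hHfin : H.Finite := hdia_fin.subset hHd
  -- hole coordinates
  set Qh : ℤ × ℤ → ℤ := fun u => (u.2 - u.1 - 1)/2 with hQhdef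
  set Ph : ℤ × ℤ → ℤ := fun u => (u.1 + u.2 - 1)/2 with hPhdef
  have hodd : ∀ h ∈ H, h.1 + h.2 = 2 * Ph h + 1 ∧ h.2 - h.1 = 2 * Qh h + 1 := by
    intro h hh
    obtain ⟨k, hk⟩ := hHodd h hh
    simp only [hQhdef, hPhdef]
    omega
  have hHb : ∀ h ∈ H, -(n:ℤ) ≤ Ph h ∧ Ph h ≤ (n:ℤ)-1 ∧ -(n:ℤ) ≤ Qh h ∧ Qh h ≤ (n:ℤ)-1 := by
    intro h hh
    have hd := (mem_diamond_iff n h).1 (hHd hh)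
    have hid := hodd h hh
    omega
  -- hypotheses for the parking lemma
  have hA : ∀ a : ℤ, ∀ T : Finset (ℤ × ℤ), ↑T ⊆ H →
      (∀ x ∈ T, a + 1 ≤ Qh x ∧ Qh x ≤ a + s) → T.card ≤ s := by
    intro a T hTH hTw
    have hsub : (↑T : Set (ℤ × ℤ)) ⊆ H ∩ {u | ∃ j : ℤ, 1 ≤ j ∧ j ≤ (s:ℤ) ∧
        u.2 - u.1 = 2*j + 2*a + 1} := by
      intro x hx
      have hxT : x ∈ T := hx
      have hb := hTw x hxT
      have hid := (hodd x (hTH hx)).2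
      exact ⟨hTH hx, ⟨Qh x - a, by omega, by omega, by omega⟩⟩
    calc T.card = (↑T : Set (ℤ × ℤ)).ncard := (Set.ncard_coe_finset T).symm
      _ ≤ _ := Set.ncard_le_ncard hsub (hHfin.inter_of_left _)
      _ ≤ s := hrows a
  have hB : ∀ g ∈ H, ∀ h ∈ H, g ≠ h → Ph g = Ph h → (s:ℤ) ≤ |Qh g - Qh h| := by
    intro g hg h hh hne hP
    have hg' := hodd g hg
    have hh' := hodd h hh
    have hsum : g.1 + g.2 = h.1 + h.2 := by omega
    have hcc := hcol g hg h hh hne hsum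
    have habs : (g.2 - g.1) - (h.2 - h.1) = 2 * (Qh g - Qh h) := by omega
    rw [habs, abs_mul, show |(2:ℤ)| = 2 by norm_num] at hcc
    omega
  obtain ⟨v, hv1, hv2, -⟩ := parking s hs H Qh Ph hA hB hHfin.toFinset
    (by simp [Set.Finite.coe_toFinset])
  have hv1' : ∀ h ∈ H, Qh h - s < v h ∧ v h ≤ Qh h :=
    fun h hh => hv1 h (hHfin.mem_toFinset.2 hh)
  have hv2' : ∀ g ∈ H, ∀ h ∈ H, Ph g < Ph h → ¬(v g ≤ v h ∧ v h ≤ Qh g) :=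
    fun g hg h hh => hv2 g (hHfin.mem_toFinset.2 hg) h (hHfin.mem_toFinset.2 hh)
  -- even coordinates
  set pe : ℤ × ℤ → ℤ := fun u => (u.1 + u.2)/2 with hpedef
  set qe : ℤ × ℤ → ℤ := fun u => (u.2 - u.1)/2 with hqedef
  have heid : ∀ u : ℤ × ℤ, Even (u.1 + u.2) →
      u.1 + u.2 = 2 * pe u ∧ u.2 - u.1 = 2 * qe u := by
    intro u hev
    obtain ⟨k, hk⟩ := hev
    simp only [hpedef, hqedef]
    omega
  set Ev : Set (ℤ × ℤ) := {u | u ∈ diamond n ∧ Even (u.1 + u.2)} with hEvdef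
  have hEvb : ∀ u ∈ Ev, -((n:ℤ) - 1) ≤ pe u ∧ pe u ≤ (n:ℤ)-1 ∧
      -((n:ℤ)-1) ≤ qe u ∧ qe u ≤ (n:ℤ)-1 := by
    intro u hu
    have hd := (mem_diamond_iff n u).1 hu.1
    have hid := heid u hu.2
    omega
  -- the two shift regions and the map f
  set Rc : ℤ × ℤ → Prop := fun u => ∃ h ∈ H, qe u = v h ∧ pe u ≤ Ph h with hRcdef
  set Cc : ℤ × ℤ → Prop := fun u => ∃ h ∈ H, pe u = Ph h ∧ v h < qe u ∧ qe u ≤ Qh h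
    with hCcdef
  set f : ℤ × ℤ → ℤ × ℤ := fun u =>
    if Rc u then (u.1 - 1, u.2) else if Cc u then (u.1 + 1, u.2) else (u.1, u.2 + 1)
    with hfdef
  have hfR : ∀ u, Rc u → f u = (u.1 - 1, u.2) := by
    intro u h; simp only [hfdef]; rw [if_pos h]
  have hfC : ∀ u, ¬Rc u → Cc u → f u = (u.1 + 1, u.2) := by
    intro u h h'; simp only [hfdef]; rw [if_neg h, if_pos h']
  have hfD : ∀ u, ¬Rc u → ¬Cc u → f u = (u.1, u.2 + 1) := by
    intro u h h'; simp only [hfdef]; rw [if_neg h, if_neg h']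
  -- f lands in the diamond
  have hfdia : ∀ u ∈ Ev, f u ∈ diamond n := by
    intro u hu
    have hb := hEvb u hu
    have hid := heid u hu.2
    rw [mem_diamond_iff]
    by_cases hR : Rc u
    · rw [hfR u hR]; dsimp only; omega
    · by_cases hC : Cc u
      · rw [hfC u hR hC]; dsimp only; omega
      · rw [hfD u hR hC]; dsimp only; omega
  -- f u is adjacent to u
  have hfadj : ∀ u : ℤ × ℤ, gridGraph.Adj u (f u) := by
    intro u
    by_cases hR : Rc u
    · rw [hfR u hR]
      show |u.1 - (u.1 - 1)| + |u.2 - u.2| = 1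
      rw [show u.1 - (u.1 - 1) = 1 by ring, show u.2 - u.2 = 0 by ring]
      norm_num
    · by_cases hC : Cc u
      · rw [hfC u hR hC]
        show |u.1 - (u.1 + 1)| + |u.2 - u.2| = 1
        rw [show u.1 - (u.1 + 1) = -1 by ring, show u.2 - u.2 = 0 by ring]
        norm_num
      · rw [hfD u hR hC]
        show |u.1 - u.1| + |u.2 - (u.2 + 1)| = 1
        rw [show u.1 - u.1 = 0 by ring, show u.2 - (u.2 + 1) = -1 by ring]
        norm_num
  -- f u has odd coordinate sum
  have hfodd : ∀ u ∈ Ev, ¬ Even ((f u).1 + (f u).2) := by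
    intro u hu hev
    have hid := heid u hu.2
    rw [Int.even_iff] at hev
    by_cases hR : Rc u
    · rw [hfR u hR] at hev; dsimp only at hev; omega
    · by_cases hC : Cc u
      · rw [hfC u hR hC] at hev; dsimp only at hev; omega
      · rw [hfD u hR hC] at hev; dsimp only at hev; omega
  -- f avoids H
  have havoid : ∀ u ∈ Ev, f u ∉ H := by
    intro u hu hmem
    have hid := heid u hu.2
    by_cases hR : Rc u
    · rw [hfR u hR] at hmem
      obtain ⟨h, hh, hq, hp⟩ := hR
      have hgid := hodd _ hmem
      have hPg : Ph ((u.1 - 1, u.2) : ℤ × ℤ) = pe u - 1 := by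
        dsimp only at hgid ⊢; omega
      have hQg : Qh ((u.1 - 1, u.2) : ℤ × ℤ) = qe u := by
        dsimp only at hgid ⊢; omega
      have hvg := hv1' _ hmem
      have hvh := hv1' h hh
      exact hv2' _ hmem h hh (by omega) ⟨by omega, by omega⟩
    · by_cases hC : Cc u
      · rw [hfC u hR hC] at hmem
        obtain ⟨h, hh, hp, hq1, hq2⟩ := hC
        have hgid := hodd _ hmem
        have hPg : Ph ((u.1 + 1, u.2) : ℤ × ℤ) = pe u := by
          dsimp only at hgid ⊢; omega
        have hQg : Qh ((u.1 + 1, u.2) : ℤ × ℤ) = qe u - 1 := by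
          dsimp only at hgid ⊢; omega
        rcases eq_or_ne ((u.1 + 1, u.2) : ℤ × ℤ) h with rfl | hne
        · omega
        · have habs := hB _ hmem h hh hne (by omega)
          have hvh := hv1' h hh
          rcases abs_cases (Qh ((u.1 + 1, u.2) : ℤ × ℤ) - Qh h) with ⟨he, _⟩ | ⟨he, _⟩ <;>
            omega
      · rw [hfD u hR hC] at hmem
        have hgid := hodd _ hmem
        have hPg : Ph ((u.1, u.2 + 1) : ℤ × ℤ) = pe u := by
          dsimp only at hgid ⊢; omega
        have hQg : Qh ((u.1, u.2 + 1) : ℤ × ℤ) = qe u := by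
          dsimp only at hgid ⊢; omega
        have hvg := hv1' _ hmem
        rcases eq_or_lt_of_le (hvg.2) with heq | hlt
        · exact hR ⟨_, hmem, by omega, by omega⟩
        · exact hC ⟨_, hmem, by omega, by omega, by omega⟩
  -- f is injective on Ev
  have hinj : ∀ u₁ ∈ Ev, ∀ u₂ ∈ Ev, f u₁ = f u₂ → u₁ = u₂ := by
    intro u₁ hu₁ u₂ hu₂ hf
    have hid1 := heid u₁ hu₁.2
    have hid2 := heid u₂ hu₂.2
    by_cases hR1 : Rc u₁ <;> by_cases hR2 : Rc u₂
    · -- R, R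
      rw [hfR u₁ hR1, hfR u₂ hR2] at hf
      rw [Prod.ext_iff] at hf ⊢
      dsimp only at hf
      exact ⟨by omega, by omega⟩
    · -- R, (C or D)
      rw [hfR u₁ hR1] at hf
      obtain ⟨h₁, hh₁, hq₁, hp₁⟩ := hR1
      by_cases hC2 : Cc u₂
      · rw [hfC u₂ hR2 hC2] at hf
        rw [Prod.ext_iff] at hf; dsimp only at hf
        obtain ⟨h₂, hh₂, hp₂, hqa, hqb⟩ := hC2
        have hco : pe u₂ = pe u₁ - 1 ∧ qe u₂ = qe u₁ + 1 := by
          constructor <;> omega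
        exact absurd ⟨by omega, by omega⟩ (hv2' h₂ hh₂ h₁ hh₁ (by omega))
      · rw [hfD u₂ hR2 hC2] at hf
        rw [Prod.ext_iff] at hf; dsimp only at hf
        have hco : pe u₂ = pe u₁ - 1 ∧ qe u₂ = qe u₁ := by constructor <;> omega
        exact absurd ⟨h₁, hh₁, by omega, by omega⟩ hR2
    · -- (C or D), R
      rw [hfR u₂ hR2] at hf
      obtain ⟨h₁, hh₁, hq₁, hp₁⟩ := hR2
      by_cases hC1 : Cc u₁
      · rw [hfC u₁ hR1 hC1] at hf
        rw [Prod.ext_iff] at hf; dsimp only at hf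
        obtain ⟨h₂, hh₂, hp₂, hqa, hqb⟩ := hC1
        have hco : pe u₁ = pe u₂ - 1 ∧ qe u₁ = qe u₂ + 1 := by
          constructor <;> omega
        exact absurd ⟨by omega, by omega⟩ (hv2' h₂ hh₂ h₁ hh₁ (by omega))
      · rw [hfD u₁ hR1 hC1] at hf
        rw [Prod.ext_iff] at hf; dsimp only at hf
        have hco : pe u₁ = pe u₂ - 1 ∧ qe u₁ = qe u₂ := by constructor <;> omega
        exact absurd ⟨h₁, hh₁, by omega, by omega⟩ hR1
    · -- neither is R
      by_cases hC1 : Cc u₁ <;> by_cases hC2 : Cc u₂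
      · rw [hfC u₁ hR1 hC1, hfC u₂ hR2 hC2] at hf
        rw [Prod.ext_iff] at hf ⊢; dsimp only at hf
        exact ⟨by omega, by omega⟩
      · -- C, D
        rw [hfC u₁ hR1 hC1, hfD u₂ hR2 hC2] at hf
        rw [Prod.ext_iff] at hf; dsimp only at hf
        obtain ⟨h, hh, hp, hqa, hqb⟩ := hC1
        have hco : pe u₂ = pe u₁ ∧ qe u₂ = qe u₁ - 1 := by constructor <;> omega
        rcases eq_or_lt_of_le (show v h ≤ qe u₂ by omega) with heq | hlt
        · exact absurd ⟨h, hh, by omega, by omega⟩ hR2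
        · exact absurd ⟨h, hh, by omega, by omega, by omega⟩ hC2
      · -- D, C
        rw [hfD u₁ hR1 hC1, hfC u₂ hR2 hC2] at hf
        rw [Prod.ext_iff] at hf; dsimp only at hf
        obtain ⟨h, hh, hp, hqa, hqb⟩ := hC2
        have hco : pe u₁ = pe u₂ ∧ qe u₁ = qe u₂ - 1 := by constructor <;> omega
        rcases eq_or_lt_of_le (show v h ≤ qe u₁ by omega) with heq | hlt
        · exact absurd ⟨h, hh, by omega, by omega⟩ hR1
        · exact absurd ⟨h, hh, by omega, by omega, by omega⟩ hC1
      · rw [hfD u₁ hR1 hC1, hfD u₂ hR2 hC2] at hf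
        rw [Prod.ext_iff] at hf ⊢; dsimp only at hf
        exact ⟨by omega, by omega⟩
  -- assemble the matching
  refine ⟨{ verts := Ev ∪ (f '' Ev),
            Adj := fun a b => (a ∈ Ev ∧ b = f a) ∨ (b ∈ Ev ∧ a = f b),
            adj_sub := ?_, edge_vert := ?_, symm := ?_ }, ?_, ?_, ?_, ?_⟩
  · rintro a b (⟨ha, rfl⟩ | ⟨hb, rfl⟩)
    · exact hfadj a
    · exact (hfadj b).symm
  · rintro a b (⟨ha, -⟩ | ⟨hb, rfl⟩)
    · exact Or.inl ha
    · exact Or.inr ⟨b, hb, rfl⟩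
  · constructor
    rintro a b (h | h)
    · exact Or.inr h
    · exact Or.inl h
  · rintro x (hx | ⟨e, he, rfl⟩)
    · exact hx.1
    · exact hfdia e he
  · -- IsMatching
    rintro x (hx | ⟨e, he, rfl⟩)
    · refine ⟨f x, Or.inl ⟨hx, rfl⟩, ?_⟩
      rintro w (⟨-, rfl⟩ | ⟨hw, hxw⟩)
      · rfl
      · exact absurd (hxw ▸ hx.2) (hfodd w hw)
    · refine ⟨e, Or.inr ⟨he, rfl⟩, ?_⟩
      rintro w (⟨hfx, rfl⟩ | ⟨hw, heq⟩)
      · exact absurd hfx.2 (hfodd e he)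
      · exact hinj w hw e he heq.symm
  · intro u hu hev
    exact Or.inl ⟨hu, hev⟩
  · rintro u huH (hu | ⟨e, he, heq⟩)
    · exact (Int.not_odd_iff_even.2 hu.2) (hHodd u huH)
    · exact havoid e he (heq ▸ huH)
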